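/- Let h be holomorphic and suppose at a point p one has Re(h(p)) = 0 and Im(e^{-h/2}h')(p) = 0 with h'(p) ≠ 0. Then along any curve γ(t) in {Re h = 0} with γ(0) = p and velocity γ̇ = -i·conj(h') (tangent to the level set of Re h), one has d/dt[Im(e^{-h/2}h')(γ(t))]|_{t=0} = -(e^{-h/2}h')(p) · Re(e^{-h}(h'' - (1/2)(h')²))(p). -/

import Mathlib

open ComplexConjugate

/-- Key computation in the swallowtail criterion: if `Re h(p) = 0`,
`Im(e^{-h/2}h')(p) = 0`, `h'(p) ≠ 0`, and `γ` is a curve in `{Re h = 0}` with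
`γ(0) = p` and velocity `γ̇ = -i·conj(h')`, then
`d/dt[Im(e^{-h/2}h')(γ(t))]|₀ = -(e^{-h/2}h')(p)·Re(e^{-h}(h'' - (1/2)(h')²))(p)`. -/
theorem swallowtail_key_computation (h : ℂ → ℂ) (hh : Differentiable ℂ h)
    (p : ℂ) (γ : ℝ → ℂ) (hγ : Differentiable ℝ γ) (hγ0 : γ 0 = p)
    (hγsing : ∀ t, (h (γ t)).re = 0)
    (hvel : ∀ t, deriv γ t = -Complex.I * conj (deriv h (γ t)))
    (hRe : (h p).re = 0)
    (hIm : (Complex.exp (-(h p) / 2) * deriv h p).im = 0)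
    (hne : deriv h p ≠ 0) :
    (deriv (fun t => (Complex.exp (-(h (γ t)) / 2) * deriv h (γ t)).im) 0 : ℂ)
      = -(Complex.exp (-(h p) / 2) * deriv h p) *
          ((Complex.exp (-(h p)) *
            (deriv (deriv h) p - (1/2) * (deriv h p) ^ 2)).re : ℂ) := by
  -- notation
  set a := h p with ha
  set b := deriv h p with hb
  set c := deriv (deriv h) p with hc
  -- the derivative of h is differentiable (analyticity)
  have hanal : AnalyticOnNhd ℂ h Set.univ := fun z _ => hh.analyticAt z
  have hh' : Differentiable ℂ (deriv h) := fun z =>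
    ((hanal.deriv z trivial).differentiableAt)
  -- F = e^{-h/2} h'
  set F : ℂ → ℂ := fun z => Complex.exp (-(h z) / 2) * deriv h z with hF
  -- derivative of F at p
  have hdh : HasDerivAt h b p := hh.differentiableAt.hasDerivAt
  have hdh' : HasDerivAt (deriv h) c p := (hh' p).hasDerivAt
  have hinner : HasDerivAt (fun z => -(h z) / 2) (-b / 2) p := by
    simpa using (hdh.neg.div_const 2)
  have hexp : HasDerivAt (fun z => Complex.exp (-(h z) / 2))
      (Complex.exp (-a / 2) * (-b / 2)) p := by
    simpa using hinner.cexp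
  have hFd : HasDerivAt F
      (Complex.exp (-a / 2) * (-b / 2) * b + Complex.exp (-a / 2) * c) p :=
    hexp.mul hdh'
  set d : ℂ := Complex.exp (-a / 2) * (-b / 2) * b + Complex.exp (-a / 2) * c with hd
  -- velocity of γ at 0
  set v : ℂ := deriv γ 0 with hv
  have hγd : HasDerivAt γ v 0 := (hγ.differentiableAt).hasDerivAt
  -- chain rule: t ↦ F (γ t)
  have hFd2 : HasDerivAt F d (γ 0) := hγ0.symm ▸ hFd
  have hcomp : HasDerivAt (fun t => F (γ t)) (v * d) 0 := by
    have := (hFd2.hasFDerivAt.restrictScalars ℝ).comp_hasDerivAt 0 hγd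
    convert this using 1
    · rfl
    · rfl
    · simp [mul_comm]
  -- take imaginary part (ℂ-valued via coercion)
  have hIma : HasDerivAt (fun t => ((F (γ t)).im : ℂ)) (((v * d).im : ℂ)) 0 := by
    have := (Complex.ofRealCLM.comp Complex.imCLM).hasFDerivAt.comp_hasDerivAt 0 hcomp
    convert this using 1
    · rfl
    · rfl
    · simp
  have hderiv0 : deriv (fun t => ((Complex.exp (-(h (γ t)) / 2) * deriv h (γ t)).im : ℂ)) 0
      = ((v * d).im : ℂ) := hIma.deriv
  rw [hderiv0]
  -- algebraic identities at p
  have hconja : conj a = -a := by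
    apply Complex.ext <;> simp [hRe]
  have hconjb : conj b = Complex.exp (-a) * b := by
    have hw : conj (Complex.exp (-a / 2) * b) = Complex.exp (-a / 2) * b :=
      Complex.conj_eq_iff_im.mpr hIm
    have : Complex.exp (a / 2) * conj b = Complex.exp (-a / 2) * b := by
      calc Complex.exp (a / 2) * conj b
          = conj (Complex.exp (-a / 2)) * conj b := by
            rw [← Complex.exp_conj]; congr 1
            rw [map_div₀, map_neg, hconja, Complex.conj_ofNat]; simp
        _ = conj (Complex.exp (-a / 2) * b) := by rw [map_mul]
        _ = Complex.exp (-a / 2) * b := hw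
    have h2 : conj b = Complex.exp (-(a / 2)) * (Complex.exp (-a / 2) * b) := by
      rw [← this]
      rw [← mul_assoc, ← Complex.exp_add]
      simp
    rw [h2, ← mul_assoc, ← Complex.exp_add]
    ring_nf
  have hvval : v = -Complex.I * (Complex.exp (-a) * b) := by
    rw [hv, hvel 0, hγ0, ← hb, hconjb]
  -- the real number w = Re(e^{-a/2} b), so that e^{-a/2} b = w
  set w : ℝ := (Complex.exp (-a / 2) * b).re with hwre
  have hwc : Complex.exp (-a / 2) * b = (w : ℂ) := by
    apply Complex.ext
    · simp [hwre]
    · simp [hIm]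
  set u : ℂ := Complex.exp (-a) * (c - (1/2) * b ^ 2) with hu
  have hkey : v * d = -Complex.I * (w : ℂ) * u := by
    rw [hvval, hd, hu, ← hwc]
    ring
  have him : (-Complex.I * (w : ℂ) * u).im = -(w * u.re) := by
    simp [Complex.mul_im, Complex.mul_re]
  rw [hkey, him, hwc]
  push_cast
  ring
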